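/- The image of the map Φ(ζ) = (exp ζ, exp(iζ)) is closed in (ℂ*)²: if a point (z,w) ∈ ℂ² with z ≠ 0 and w ≠ 0 lies in the topological closure of the set S = {(exp ζ, exp(iζ)) : ζ ∈ ℂ}, then (z,w) ∈ S. Hence Φ maps ℂ biholomorphically onto a closed analytic subset of (ℂ*)². -/

import Mathlib

/-- The image of Stein's curve `Φ(ζ) = (exp ζ, exp(iζ))` is closed in `(ℂ*)²`:
any point of `(ℂ*)²` lying in the closure of the image already lies in the image. -/
theorem stein_curve_image_closed (z w : ℂ) (hz : z ≠ 0) (hw : w ≠ 0)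
    (h : (z, w) ∈ closure (Set.range (fun ζ : ℂ => (Complex.exp ζ, Complex.exp (Complex.I * ζ))))) :
    (z, w) ∈ Set.range (fun ζ : ℂ => (Complex.exp ζ, Complex.exp (Complex.I * ζ))) := by
  rw [mem_closure_iff_seq_limit] at h
  obtain ⟨u, hu, hlim⟩ := h
  choose ζ hζ using hu
  set a : ℝ := Real.log ‖z‖ with ha
  set b : ℝ := -Real.log ‖w‖ with hb
  -- convergence of the two coordinates
  have h1 : Filter.Tendsto (fun n => Complex.exp (ζ n)) Filter.atTop (nhds z) := by
    have := (continuous_fst.tendsto (z, w)).comp hlim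
    refine this.congr fun n => ?_
    simp only [Function.comp]; rw [← hζ n]
  have h2 : Filter.Tendsto (fun n => Complex.exp (Complex.I * ζ n)) Filter.atTop (nhds w) := by
    have := (continuous_snd.tendsto (z, w)).comp hlim
    refine this.congr fun n => ?_
    simp only [Function.comp]; rw [← hζ n]
  have habs1 : Filter.Tendsto (fun n => ‖Complex.exp (ζ n)‖) Filter.atTop
      (nhds ‖z‖) := (continuous_norm.tendsto z).comp h1
  have habs2 : Filter.Tendsto (fun n => ‖Complex.exp (Complex.I * ζ n)‖) Filter.atTop
      (nhds ‖w‖) := (continuous_norm.tendsto w).comp h2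
  have hre : Filter.Tendsto (fun n => (ζ n).re) Filter.atTop (nhds a) := by
    have := ((Real.continuousAt_log (by simpa using hz)).tendsto).comp habs1
    refine this.congr fun n => ?_
    simp [Complex.norm_exp, Real.log_exp]
  have him : Filter.Tendsto (fun n => (ζ n).im) Filter.atTop (nhds b) := by
    have := ((Real.continuousAt_log (by simpa using hw)).tendsto).comp habs2
    have h' : Filter.Tendsto (fun n => -(ζ n).im) Filter.atTop
        (nhds (Real.log ‖w‖)) := by
      refine this.congr fun n => ?_
      simp [Complex.norm_exp, Real.log_exp]
    have := h'.neg
    simpa [hb] using this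
  set c : ℂ := (a : ℂ) + (b : ℂ) * Complex.I with hc
  have hζlim : Filter.Tendsto ζ Filter.atTop (nhds c) := by
    have : Filter.Tendsto (fun n => ((ζ n).re : ℂ) + ((ζ n).im : ℂ) * Complex.I)
        Filter.atTop (nhds c) := by
      exact ((Complex.continuous_ofReal.tendsto a).comp hre).add
        ((((Complex.continuous_ofReal.tendsto b).comp him)).mul tendsto_const_nhds)
    refine this.congr fun n => ?_
    simp [Complex.re_add_im]
  have hz' : Complex.exp c = z :=
    tendsto_nhds_unique ((Complex.continuous_exp.tendsto c).comp hζlim) h1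
  have hw' : Complex.exp (Complex.I * c) = w := by
    refine tendsto_nhds_unique ?_ h2
    exact (Complex.continuous_exp.tendsto _).comp
      ((tendsto_const_nhds.mul hζlim))
  exact ⟨c, by simp [hz', hw']⟩
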